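/- Let b be a symmetric bilinear form on a finite-dimensional real vector space V, and let u ∈ V satisfy b(u,u) = 0 and b(u,y) ≠ 0 for some y ∈ V (i.e. u ∉ rad(b)). Then the radical of the restriction of b to the hyperplane u^⊥ᵇ = {x ∈ V : b(u,x) = 0} equals rad(b) ⊕ ℝ·u; that is, {w ∈ u^⊥ᵇ : b(w,z) = 0 for all z ∈ u^⊥ᵇ} = rad(b) + span{u}, and this sum is direct since u ∉ rad(b). -/

import Mathlib

/-- If `b` is a symmetric bilinear form on a finite-dimensional
real vector space `V`, and `u ∈ V` satisfies `b(u,u) = 0` and `u ∉ rad(b)`,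
then the radical of the restriction of `b` to `u^⊥ᵇ = {x | b(u,x) = 0}` equals
`rad(b) ⊕ ℝ·u`: as submodules of `V`, the radical of `b|_{u^⊥ᵇ}` (pushed
forward along the inclusion) is `rad(b) + span{u}`, `u ∉ rad(b)`, and
`rad(b) ∩ span{u} = {0}`. -/
theorem stmt9
    {V : Type*} [AddCommGroup V] [Module ℝ V] [FiniteDimensional ℝ V]
    (b : V →ₗ[ℝ] V →ₗ[ℝ] ℝ)
    (hb_symm : ∀ y z : V, b y z = b z y)
    (u : V) (huu : b u u = 0) (hu : ∃ y : V, b u y ≠ 0) :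
    (LinearMap.ker
          (b.domRestrict₁₂ (LinearMap.ker (b u)) (LinearMap.ker (b u)))).map
        (LinearMap.ker (b u)).subtype =
      LinearMap.ker b ⊔ Submodule.span ℝ {u} ∧
    LinearMap.ker b ⊓ Submodule.span ℝ {u} = ⊥ := by
  obtain ⟨y, hy⟩ := hu
  constructor
  · apply le_antisymm
    · rintro w ⟨⟨w, hw⟩, hwk, rfl⟩
      simp only [LinearMap.mem_ker] at hwk hw
      have hrad : ∀ z : V, b u z = 0 → b w z = 0 := by
        intro z hz
        have := LinearMap.congr_fun hwk ⟨z, hz⟩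
        simpa [LinearMap.domRestrict₁₂_apply] using this
      set c : ℝ := b w y / b u y with hc
      have key : w - c • u ∈ LinearMap.ker b := by
        rw [LinearMap.mem_ker]
        ext z
        have hz' : b u (z - (b u z / b u y) • y) = 0 := by
          simp only [map_sub, map_smul, smul_eq_mul]
          field_simp
          ring
        have h1 := hrad _ hz'
        simp only [map_sub, map_smul, smul_eq_mul] at h1
        have h1' : b w z = (b u z / b u y) * b w y := by linarith
        simp only [LinearMap.sub_apply, LinearMap.smul_apply, map_sub, map_smul,
          smul_eq_mul, LinearMap.zero_apply, Pi.zero_apply, LinearMap.coe_mk]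
        rw [h1', hc]
        field_simp
        ring
      have hdecomp : (w : V) = (w - c • u) + c • u := by abel
      show w ∈ _
      rw [hdecomp]
      exact Submodule.add_mem_sup key
        (Submodule.smul_mem _ _ (Submodule.mem_span_singleton_self u))
    · apply sup_le
      · intro x hx
        simp only [SetLike.mem_coe, LinearMap.mem_ker] at hx
        have hxW : b u x = 0 := by rw [hb_symm]; simp [hx]
        refine ⟨⟨x, hxW⟩, ?_, rfl⟩
        simp only [SetLike.mem_coe, LinearMap.mem_ker]
        ext z
        simp [LinearMap.domRestrict₁₂_apply, hx]
      · rw [Submodule.span_le, Set.singleton_subset_iff]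
        refine ⟨⟨u, huu⟩, ?_, rfl⟩
        simp only [SetLike.mem_coe, LinearMap.mem_ker]
        ext z
        obtain ⟨z, hz⟩ := z
        rw [LinearMap.mem_ker] at hz
        simpa [LinearMap.domRestrict₁₂_apply] using hz
  · rw [eq_bot_iff]
    rintro x ⟨hx, hxs⟩
    obtain ⟨c, rfl⟩ := Submodule.mem_span_singleton.mp hxs
    rcases eq_or_ne c 0 with rfl | hc
    · simp
    · exfalso
      simp only [SetLike.mem_coe, LinearMap.mem_ker] at hx
      have : b (c • u) y = 0 := by rw [hx]; simp
      simp only [map_smul, LinearMap.smul_apply, smul_eq_mul] at this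
      exact hy ((mul_eq_zero.mp this).resolve_left hc)
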